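/- Let X and Y be real Banach spaces, L(X*,Y) the space of bounded linear operators from the dual X* to Y equipped with the operator norm, let t > 0, let x : [0,∞) → L(X*,Y) be cadlag (right-continuous with left limits in operator norm), and let y* : [0,∞) → X* be cadlag with finite total variation T_t(y*) := sup_σ Σ_i ‖y*(t_i) − y*(t_{i−1})‖_{X*} < ∞ over finite partitions σ of [0,t]. Then the Y-valued Riemann–Stieltjes sums converge as the mesh tends to zero: there exists L ∈ Y such that for every ε > 0 there is δ > 0 so that for every finite partition 0 = t_0 < t_1 < ⋯ < t_m = t with max_i (t_{i+1} − t_i) < δ, one has ‖Σ_{i=0}^{m−1} x(t_i)(y*(t_{i+1}) − y*(t_i)) − L‖_Y < ε. -/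

import Mathlib

open Filter Set

/-- A function on `[0,∞)` (modelled as a function on `ℝ`) with values in a
topological space is cadlag if it is right-continuous at every point of `[0,∞)`
and has left limits at every point of `(0,∞)`. -/
def IsCadlag {E : Type*} [TopologicalSpace E] (f : ℝ → E) : Prop :=
  (∀ s : ℝ, 0 ≤ s → ContinuousWithinAt f (Set.Ici s) s) ∧
  (∀ s : ℝ, 0 < s → ∃ L : E, Tendsto f (nhdsWithin s (Set.Iio s)) (nhds L))

/-- A finite partition `0 = τ 0 < τ 1 < ⋯ < τ m = t` of the interval `[0,t]`. -/
structure IntervalPartition (t : ℝ) where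
  m : ℕ
  τ : ℕ → ℝ
  m_pos : 0 < m
  first : τ 0 = 0
  last : τ m = t
  increasing : ∀ i < m, τ i < τ (i + 1)

/-- generic monotone from local increase -/
lemma seq_mono {α : Type*} [Preorder α] (u : ℕ → α) (k : ℕ)
    (h : ∀ i < k, u i < u (i+1)) : ∀ i j, i ≤ j → j ≤ k → u i ≤ u j := by
  intro i j hij hjk
  induction j with
  | zero => simp_all
  | succ j ih =>
    rcases Nat.lt_or_ge i (j+1) with hl | hg
    · exact le_trans (ih (by omega) (by omega)) (le_of_lt (h j (by omega)))
    · have : i = j + 1 := by omega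
      subst this; rfl

lemma seq_strict {α : Type*} [Preorder α] (u : ℕ → α) (k : ℕ)
    (h : ∀ i < k, u i < u (i+1)) : ∀ i j, i < j → j ≤ k → u i < u j := by
  intro i j hij hjk
  calc u i < u (i+1) := h i (by omega)
    _ ≤ u j := seq_mono u k h (i+1) j (by omega) hjk

lemma locate {α : Type*} [LinearOrder α] (u : ℕ → α) (k : ℕ) (s : α)
    (h0 : u 0 ≤ s) (hk : s < u k) : ∃ j < k, u j ≤ s ∧ s < u (j+1) := by
  induction k with
  | zero => exact absurd (lt_of_le_of_lt h0 hk) (lt_irrefl _)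
  | succ k ih =>
    rcases le_or_gt (u k) s with hle | hlt
    · exact ⟨k, by omega, hle, hk⟩
    · obtain ⟨j, hj, h1, h2⟩ := ih hlt
      exact ⟨j, by omega, h1, h2⟩

lemma part_nonneg {t : ℝ} (σ : IntervalPartition t) {i : ℕ} (hi : i ≤ σ.m) : 0 ≤ σ.τ i := by
  have := seq_mono σ.τ σ.m σ.increasing 0 i (Nat.zero_le _) hi
  rwa [σ.first] at this

lemma part_le_t {t : ℝ} (σ : IntervalPartition t) {i : ℕ} (hi : i ≤ σ.m) : σ.τ i ≤ t := by
  have := seq_mono σ.τ σ.m σ.increasing i σ.m hi le_rfl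
  rwa [σ.last] at this

/-- sum over biUnion is at most sum of sums, for nonneg f (real valued) -/
lemma sum_biUnion_le_real {ι κ : Type*} [DecidableEq κ] (s : Finset ι) (g : ι → Finset κ)
    (f : κ → ℝ) (hf : ∀ i, 0 ≤ f i) :
    ∑ i ∈ s.biUnion g, f i ≤ ∑ l ∈ s, ∑ i ∈ g l, f i := by
  classical
  induction s using Finset.induction with
  | empty => simp
  | @insert a s' hx ih =>
    rw [Finset.biUnion_insert, Finset.sum_insert hx]
    have h1 : ∑ i ∈ g a ∪ s'.biUnion g, f i ≤ ∑ i ∈ g a, f i + ∑ i ∈ s'.biUnion g, f i := by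
      have := Finset.sum_union_inter (s₁ := g a) (s₂ := s'.biUnion g) (f := f)
      have h2 : 0 ≤ ∑ i ∈ g a ∩ s'.biUnion g, f i := Finset.sum_nonneg fun i _ => hf i
      linarith
    exact le_trans h1 (by linarith [ih])

section ChainBound
variable {E : Type*} [NormedAddCommGroup E]

/-- prepend 0 to a chain -/
lemma chain_prepend (y : ℝ → E) (r : ℕ) (v : ℕ → ℝ)
    (hinc : ∀ i < r, v i < v (i+1)) (h0 : 0 ≤ v 0) :
    ∃ (r' : ℕ) (v' : ℕ → ℝ), (∀ i < r', v' i < v' (i+1)) ∧ v' 0 = 0 ∧ v' r' = v r ∧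
      ∑ i ∈ Finset.range r, ‖y (v (i+1)) - y (v i)‖ ≤
        ∑ i ∈ Finset.range r', ‖y (v' (i+1)) - y (v' i)‖ := by
  rcases eq_or_lt_of_le h0 with h | h
  · exact ⟨r, v, hinc, h.symm, rfl, le_rfl⟩
  · refine ⟨r+1, fun i => if i = 0 then 0 else v (i-1), ?_, by simp, by simp, ?_⟩
    · intro i hi
      rcases Nat.eq_zero_or_pos i with rfl | hp
      · simpa using h
      · have h1 : ¬ (i = 0) := by omega
        have h2 : ¬ (i + 1 = 0) := by omega
        simp only [h1, h2, if_false]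
        have := hinc (i-1) (by omega)
        have he : i - 1 + 1 = i + 1 - 1 := by omega
        rwa [he] at this
    · rw [Finset.sum_range_succ']
      have : ∀ i ∈ Finset.range r,
          ‖y (v (i+1)) - y (v i)‖ =
          ‖y (if i + 1 + 1 = 0 then 0 else v (i+1+1-1)) - y (if i + 1 = 0 then 0 else v (i+1-1))‖ := by
        intro i _; norm_num
      rw [Finset.sum_congr rfl this]
      have : 0 ≤ ‖y (if 0 + 1 = 0 then (0:ℝ) else v (0+1-1)) - y (if (0:ℕ) = 0 then 0 else v (0-1))‖ :=
        norm_nonneg _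
      linarith

/-- append t to a chain -/
lemma chain_append (y : ℝ → E) (t : ℝ) (r : ℕ) (v : ℕ → ℝ)
    (hinc : ∀ i < r, v i < v (i+1)) (hrt : v r ≤ t) :
    ∃ (r' : ℕ) (v' : ℕ → ℝ), (∀ i < r', v' i < v' (i+1)) ∧ v' 0 = v 0 ∧ v' r' = t ∧
      ∑ i ∈ Finset.range r, ‖y (v (i+1)) - y (v i)‖ ≤
        ∑ i ∈ Finset.range r', ‖y (v' (i+1)) - y (v' i)‖ := by
  rcases eq_or_lt_of_le hrt with h | h
  · exact ⟨r, v, hinc, rfl, h, le_rfl⟩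
  · refine ⟨r+1, fun i => if i ≤ r then v i else t, ?_, by simp, by simp, ?_⟩
    · intro i hi
      rcases Nat.lt_or_ge i r with hp | hp
      · have h1 : i ≤ r := by omega
        have h2 : i + 1 ≤ r := by omega
        simp only [h1, h2, if_true]
        exact hinc i hp
      · have : i = r := by omega
        subst this
        have h1 : i ≤ i := le_rfl
        have h2 : ¬ (i + 1 ≤ i) := by omega
        simp only [h1, h2, if_true, if_false]
        exact h
    · rw [Finset.sum_range_succ]
      have : ∀ i ∈ Finset.range r,
          ‖y (v (i+1)) - y (v i)‖ =
          ‖y (if i + 1 ≤ r then v (i+1) else t) - y (if i ≤ r then v i else t)‖ := by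
        intro i hi
        simp only [Finset.mem_range] at hi
        have h1 : i + 1 ≤ r := by omega
        have h2 : i ≤ r := by omega
        rw [if_pos h1, if_pos h2]
      rw [Finset.sum_congr rfl this]
      have : 0 ≤ ‖y (if r + 1 ≤ r then v (r+1) else t) - y (if r ≤ r then v r else t)‖ :=
        norm_nonneg _
      linarith
end ChainBound

section FactA
variable {E : Type*} [NormedAddCommGroup E]

lemma chain_le_V (t : ℝ) (ht : 0 < t) (y : ℝ → E) (V : ℝ)
    (hV : ∀ σ : IntervalPartition t,
      ∑ i ∈ Finset.range σ.m, ‖y (σ.τ (i + 1)) - y (σ.τ i)‖ ≤ V)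
    (r : ℕ) (v : ℕ → ℝ) (hinc : ∀ i < r, v i < v (i+1))
    (h0 : 0 ≤ v 0) (hrt : v r ≤ t) :
    ∑ i ∈ Finset.range r, ‖y (v (i+1)) - y (v i)‖ ≤ V := by
  obtain ⟨r1, v1, hinc1, h01, hend1, hsum1⟩ := chain_prepend y r v hinc h0
  have h1t : v1 r1 ≤ t := hend1 ▸ hrt
  obtain ⟨r2, v2, hinc2, h02, hend2, hsum2⟩ := chain_append y t r1 v1 hinc1 h1t
  have h2first : v2 0 = 0 := h02.trans h01
  have hr2 : 0 < r2 := by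
    by_contra hc
    have : r2 = 0 := by omega
    subst this
    rw [h2first] at hend2
    linarith
  have := hV ⟨r2, v2, hr2, h2first, hend2, hinc2⟩
  simp only at this
  linarith
end FactA

section FactB
variable {E : Type*} [NormedAddCommGroup E]

lemma small_var_right (t : ℝ) (ht : 0 < t) (y : ℝ → E)
    (hy1 : ∀ s : ℝ, 0 ≤ s → ContinuousWithinAt y (Set.Ici s) s)
    (V : ℝ)
    (hV : ∀ σ : IntervalPartition t,
      ∑ i ∈ Finset.range σ.m, ‖y (σ.τ (i + 1)) - y (σ.τ i)‖ ≤ V)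
    (u : ℝ) (hu0 : 0 ≤ u) (hut : u ≤ t) (ε : ℝ) (hε : 0 < ε) :
    ∃ δ : ℝ, 0 < δ ∧ ∀ (r : ℕ) (v : ℕ → ℝ), (∀ i < r, v i < v (i+1)) →
      u ≤ v 0 → v r ≤ u + δ → v r ≤ t →
      ∑ i ∈ Finset.range r, ‖y (v (i+1)) - y (v i)‖ ≤ ε := by
  by_contra hcon
  push_neg at hcon
  have hc : ∀ δ : ℝ, 0 < δ → ∃ (r : ℕ) (v : ℕ → ℝ), (∀ i < r, v i < v (i+1)) ∧
      u ≤ v 0 ∧ v r ≤ u + δ ∧ v r ≤ t ∧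
      ε < ∑ i ∈ Finset.range r, ‖y (v (i+1)) - y (v i)‖ := by
    intro δ hδ
    obtain ⟨r, v, h1, h2, h3, h4, h5⟩ := hcon δ hδ
    exact ⟨r, v, h1, h2, h3, h4, h5⟩
  -- rule out u = t
  rcases eq_or_lt_of_le hut with rfl | hu_lt
  · obtain ⟨r, v, h1, h2, h3, h4, h5⟩ := hc 1 one_pos
    have hr0 : r = 0 := by
      by_contra hr
      have := seq_strict v r h1 0 r (by omega) le_rfl
      linarith
    subst hr0
    simp at h5
    linarith
  -- sets of chain sums
  set Sset : ℝ → Set ℝ := fun δ =>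
    {S | ∃ (r : ℕ) (v : ℕ → ℝ), (∀ i < r, v i < v (i+1)) ∧
      u ≤ v 0 ∧ v r ≤ u + δ ∧ v r ≤ t ∧
      S = ∑ i ∈ Finset.range r, ‖y (v (i+1)) - y (v i)‖} with hSset
  have hmem0 : ∀ δ : ℝ, 0 < δ → (0:ℝ) ∈ Sset δ := by
    intro δ hδ
    exact ⟨0, fun _ => u, by omega, le_rfl, by linarith, hut, by simp⟩
  have hne : ∀ δ : ℝ, 0 < δ → (Sset δ).Nonempty := fun δ hδ => ⟨0, hmem0 δ hδ⟩
  have hbdd : ∀ δ : ℝ, BddAbove (Sset δ) := by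
    intro δ
    refine ⟨V, ?_⟩
    rintro S ⟨r, v, h1, h2, h3, h4, rfl⟩
    exact chain_le_V t ht y V hV r v h1 (le_trans hu0 h2) h4
  set W : ℝ → ℝ := fun δ => sSup (Sset δ) with hW
  have hWgt : ∀ δ : ℝ, 0 < δ → ε < W δ := by
    intro δ hδ
    obtain ⟨r, v, h1, h2, h3, h4, h5⟩ := hc δ hδ
    exact lt_of_lt_of_le h5 (le_csSup (hbdd δ) ⟨r, v, h1, h2, h3, h4, rfl⟩)
  set c : ℝ := sInf (W '' Set.Ioi 0) with hcdef
  have himne : (W '' Set.Ioi 0).Nonempty := ⟨W 1, 1, by norm_num, rfl⟩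
  have himbdd : BddBelow (W '' Set.Ioi 0) := by
    refine ⟨ε, ?_⟩
    rintro b ⟨δ, hδ, rfl⟩
    exact (hWgt δ hδ).le
  have hεc : ε ≤ c := le_csInf himne (by rintro b ⟨δ, hδ, rfl⟩; exact (hWgt δ hδ).le)
  have hc_pos : 0 < c := lt_of_lt_of_le hε hεc
  have hcleW : ∀ δ : ℝ, 0 < δ → c ≤ W δ := fun δ hδ => csInf_le himbdd ⟨δ, hδ, rfl⟩
  -- right continuity at u
  have hrc := hy1 u hu0
  rw [ContinuousWithinAt, Metric.tendsto_nhdsWithin_nhds] at hrc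
  obtain ⟨δ0, hδ0, hrc⟩ := hrc (c/8) (by linarith)
  set δ1 : ℝ := δ0 / 2 with hδ1def
  have hδ1 : 0 < δ1 := by positivity
  -- inductive construction
  have key : ∀ n : ℕ, ∃ (r : ℕ) (v : ℕ → ℝ), (∀ i < r, v i < v (i+1)) ∧
      u < v 0 ∧ v r ≤ u + δ1 ∧ v r ≤ t ∧
      (n : ℝ) * (c/4) ≤ ∑ i ∈ Finset.range r, ‖y (v (i+1)) - y (v i)‖ := by
    intro n
    induction n with
    | zero =>
      refine ⟨0, fun _ => min (u + δ1) t, by omega, ?_, ?_, ?_, by simp⟩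
      · exact lt_min (by linarith) hu_lt
      · exact min_le_left _ _
      · exact min_le_right _ _
    | succ n ih =>
      obtain ⟨r, v, hinc, hv0, hvr, hvt, hsum⟩ := ih
      set η : ℝ := min δ1 ((v 0 - u)/2) with hηdef
      have hη : 0 < η := lt_min hδ1 (by linarith)
      have hWη : c ≤ W η := hcleW η hη
      obtain ⟨S, hSmem, hSgt⟩ := exists_lt_of_lt_csSup (hne η hη) (show W η - c/8 < W η by linarith)
      obtain ⟨r', v', hinc', hv0', hvr', hvt', rfl⟩ := hSmem
      have hr' : 0 < r' := by
        by_contra hr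
        have : r' = 0 := by omega
        subst this
        simp at hSgt
        linarith
      obtain ⟨k, rfl⟩ : ∃ k, r' = k + 1 := ⟨r' - 1, by omega⟩
      -- all chain points close to u
      have hpts : ∀ i ≤ k + 1, u ≤ v' i ∧ v' i ≤ u + η := by
        intro i hi
        constructor
        · exact le_trans hv0' (seq_mono v' (k+1) hinc' 0 i (by omega) hi)
        · exact le_trans (seq_mono v' (k+1) hinc' i (k+1) hi le_rfl) hvr'
      have hydist : ∀ i ≤ k + 1, ‖y (v' i) - y u‖ < c/8 := by
        intro i hi
        obtain ⟨hl, hr⟩ := hpts i hi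
        have h1 : dist (v' i) u < δ0 := by
          rw [Real.dist_eq, abs_of_nonneg (by linarith)]
          have : η ≤ δ1 := min_le_left _ _
          linarith
        have := hrc hl h1
        rwa [dist_eq_norm] at this
      have hfirst : ‖y (v' 1) - y (v' 0)‖ < c/4 := by
        have h1 := hydist 0 (by omega)
        have h2 := hydist 1 (by omega)
        calc ‖y (v' 1) - y (v' 0)‖ ≤ ‖y (v' 1) - y u‖ + ‖y (v' 0) - y u‖ := by
              rw [← dist_eq_norm, ← dist_eq_norm, ← dist_eq_norm]
              exact dist_triangle_right _ _ _
          _ < c/4 := by linarith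
      have hsplit : ∑ i ∈ Finset.range (k+1), ‖y (v' (i+1)) - y (v' i)‖ =
          (∑ i ∈ Finset.range k, ‖y (v' (i+1+1)) - y (v' (i+1))‖) + ‖y (v' 1) - y (v' 0)‖ :=
        Finset.sum_range_succ' _ k
      have hS2 : c/4 ≤ ∑ i ∈ Finset.range k, ‖y (v' (i+1+1)) - y (v' (i+1))‖ := by
        have : W η - c/8 ≥ c - c/8 := by linarith
        have h78 : c - c/8 < ∑ i ∈ Finset.range (k+1), ‖y (v' (i+1)) - y (v' i)‖ := by linarith
        rw [hsplit] at h78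
        linarith
      -- combine chains
      refine ⟨k + 1 + r, fun i => if i ≤ k then v' (i+1) else v (i - (k+1)), ?_, ?_, ?_, ?_, ?_⟩
      · intro i hi
        rcases Nat.lt_or_ge i k with hik | hik
        · have h1 : i ≤ k := by omega
          have h2 : i + 1 ≤ k := by omega
          simp only [h1, h2, if_true]
          exact hinc' (i+1) (by omega)
        rcases Nat.eq_or_lt_of_le hik with heq | hik'
        · have h1 : i ≤ k := by omega
          have h2 : ¬ (i + 1 ≤ k) := by omega
          simp only [h1, h2, if_true, if_false]
          have ha : v' (i + 1) ≤ u + η := (hpts (i+1) (by omega)).2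
          have hb : u + η < v 0 := by
            have : η ≤ (v 0 - u)/2 := min_le_right _ _
            linarith
          have : i + 1 - (k + 1) = 0 := by omega
          rw [this]
          linarith
        · have h1 : ¬ (i ≤ k) := by omega
          have h2 : ¬ (i + 1 ≤ k) := by omega
          simp only [h1, h2, if_false]
          have := hinc (i - (k+1)) (by omega)
          have he : i - (k+1) + 1 = i + 1 - (k+1) := by omega
          rwa [he] at this
      · simp only [Nat.zero_le, if_true]
        exact lt_of_le_of_lt hv0' (hinc' 0 (by omega))
      · have h1 : ¬ (k + 1 + r ≤ k) := by omega
        simp only [h1, if_false]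
        have : k + 1 + r - (k+1) = r := by omega
        rw [this]; exact hvr
      · have h1 : ¬ (k + 1 + r ≤ k) := by omega
        simp only [h1, if_false]
        have : k + 1 + r - (k+1) = r := by omega
        rw [this]; exact hvt
      · set w : ℕ → ℝ := fun i => if i ≤ k then v' (i+1) else v (i - (k+1)) with hwdef
        have hsplit2 : ∑ i ∈ Finset.range (k + 1 + r), ‖y (w (i+1)) - y (w i)‖ =
            (∑ i ∈ Finset.Ico 0 k, ‖y (w (i+1)) - y (w i)‖) +
            ∑ i ∈ Finset.Ico k (k+1+r), ‖y (w (i+1)) - y (w i)‖ := by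
          rw [Finset.range_eq_Ico]
          exact (Finset.sum_Ico_consecutive _ (by omega) (by omega)).symm
        have hpart1 : ∑ i ∈ Finset.Ico 0 k, ‖y (w (i+1)) - y (w i)‖ =
            ∑ i ∈ Finset.range k, ‖y (v' (i+1+1)) - y (v' (i+1))‖ := by
          rw [← Finset.range_eq_Ico]
          refine Finset.sum_congr rfl fun i hi => ?_
          simp only [Finset.mem_range] at hi
          have h1 : i ≤ k := by omega
          have h2 : i + 1 ≤ k := by omega
          simp only [hwdef, h1, h2, if_true]
        have hpart2 : ∑ i ∈ Finset.Ico (k+1) (k+1+r), ‖y (w (i+1)) - y (w i)‖ =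
            ∑ i ∈ Finset.range r, ‖y (v (i+1)) - y (v i)‖ := by
          rw [Finset.sum_Ico_eq_sum_range]
          have he : k + 1 + r - (k+1) = r := by omega
          rw [he]
          refine Finset.sum_congr rfl fun i hi => ?_
          have h1 : ¬ (k + 1 + i ≤ k) := by omega
          have h2 : ¬ (k + 1 + i + 1 ≤ k) := by omega
          simp only [hwdef, h1, h2, if_false]
          have e1 : k + 1 + i + 1 - (k+1) = i + 1 := by omega
          have e2 : k + 1 + i - (k+1) = i := by omega
          rw [e1, e2]
        have hmid : ∑ i ∈ Finset.Ico k (k+1+r), ‖y (w (i+1)) - y (w i)‖ =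
            ‖y (w (k+1)) - y (w k)‖ + ∑ i ∈ Finset.Ico (k+1) (k+1+r), ‖y (w (i+1)) - y (w i)‖ := by
          rw [← Finset.sum_Ico_consecutive _ (show k ≤ k+1 by omega) (show k+1 ≤ k+1+r by omega)]
          congr 1
          rw [Finset.sum_Ico_eq_sum_range]
          simp
        rw [hsplit2, hpart1, hmid, hpart2]
        have hnn : (0:ℝ) ≤ ‖y (w (k+1)) - y (w k)‖ := norm_nonneg _
        push_cast
        nlinarith [hS2, hsum]
  -- contradiction with total variation bound
  obtain ⟨n, hn⟩ := exists_nat_gt (V / (c/4))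
  obtain ⟨r, v, hinc, hv0, hvr, hvt, hsum⟩ := key n
  have hle : ∑ i ∈ Finset.range r, ‖y (v (i+1)) - y (v i)‖ ≤ V :=
    chain_le_V t ht y V hV r v hinc (by linarith) hvt
  have : V < (n:ℝ) * (c/4) := by
    rw [div_lt_iff₀ (by linarith : (0:ℝ) < c/4)] at hn
    linarith
  linarith
end FactB

section FactC
variable {F : Type*} [NormedAddCommGroup F]

def OscPart (x : ℝ → F) (ε s : ℝ) : Prop :=
  ∃ (k : ℕ) (u : ℕ → ℝ), 0 < k ∧ u 0 = 0 ∧ u k = s ∧ (∀ j < k, u j < u (j+1)) ∧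
    ∀ j < k, ∀ a b : ℝ, u j < a → a < u (j+1) → u j < b → b < u (j+1) → ‖x a - x b‖ ≤ ε

lemma oscPart_append (x : ℝ → F) (ε s s' : ℝ) (h : OscPart x ε s) (hss : s < s')
    (hosc : ∀ a b : ℝ, s < a → a < s' → s < b → b < s' → ‖x a - x b‖ ≤ ε) :
    OscPart x ε s' := by
  obtain ⟨k, u, hk, h0, hks, hinc, hos⟩ := h
  refine ⟨k + 1, fun j => if j ≤ k then u j else s', by omega, by simp [h0, hk], ?_, ?_, ?_⟩
  · simp
  · intro j hj
    rcases Nat.lt_or_ge j k with hjk | hjk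
    · have h1 : j ≤ k := by omega
      have h2 : j + 1 ≤ k := by omega
      simp only [h1, h2, if_true]
      exact hinc j hjk
    · have hjeq : j = k := by omega
      have h1 : j ≤ k := by omega
      have h2 : ¬ (j + 1 ≤ k) := by omega
      simp only [h1, h2, if_true, if_false]
      rw [hjeq, hks]; exact hss
  · intro j hj a b ha1 ha2 hb1 hb2
    rcases Nat.lt_or_ge j k with hjk | hjk
    · have h1 : j ≤ k := by omega
      have h2 : j + 1 ≤ k := by omega
      simp only [h1, h2, if_true] at ha1 ha2 hb1 hb2
      exact hos j hjk a b ha1 ha2 hb1 hb2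
    · have hjeq : j = k := by omega
      have h1 : j ≤ k := by omega
      have h2 : ¬ (j + 1 ≤ k) := by omega
      simp only [h1, h2, if_true, if_false] at ha1 ha2 hb1 hb2
      rw [hjeq, hks] at ha1 hb1
      exact hosc a b ha1 ha2 hb1 hb2

lemma osc_exists (t : ℝ) (ht : 0 < t) (x : ℝ → F) (hx : IsCadlag x)
    (ε : ℝ) (hε : 0 < ε) : OscPart x ε t := by
  set A : Set ℝ := {s | 0 < s ∧ s ≤ t ∧ OscPart x ε s} with hA
  -- nonempty
  have hrc0 := hx.1 0 le_rfl
  rw [ContinuousWithinAt, Metric.tendsto_nhdsWithin_nhds] at hrc0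
  obtain ⟨δ', hδ', h0⟩ := hrc0 (ε/2) (by linarith)
  have hosc0 : ∀ a b : ℝ, (0:ℝ) < a → a < min δ' t → (0:ℝ) < b → b < min δ' t →
      ‖x a - x b‖ ≤ ε := by
    intro a b ha1 ha2 hb1 hb2
    have hda : dist (x a) (x 0) < ε/2 := h0 (Set.mem_Ici.mpr (le_of_lt ha1))
      (by rw [Real.dist_eq, sub_zero, abs_of_pos ha1]; exact lt_of_lt_of_le ha2 (min_le_left _ _))
    have hdb : dist (x b) (x 0) < ε/2 := h0 (Set.mem_Ici.mpr (le_of_lt hb1))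
      (by rw [Real.dist_eq, sub_zero, abs_of_pos hb1]; exact lt_of_lt_of_le hb2 (min_le_left _ _))
    calc ‖x a - x b‖ = dist (x a) (x b) := (dist_eq_norm _ _).symm
      _ ≤ dist (x a) (x 0) + dist (x b) (x 0) := dist_triangle_right _ _ _
      _ ≤ ε := by linarith
  have hs0 : min δ' t ∈ A := by
    refine ⟨lt_min hδ' ht, min_le_right _ _, 1, fun j => if j = 0 then 0 else min δ' t,
      one_pos, by simp, by simp, ?_, ?_⟩
    · intro j hj
      have : j = 0 := by omega
      subst this
      simp [lt_min hδ' ht]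
    · intro j hj a b ha1 ha2 hb1 hb2
      have : j = 0 := by omega
      subst this
      simp only [if_pos rfl] at ha1 hb1
      simp only [Nat.zero_add, if_neg one_ne_zero] at ha2 hb2
      exact hosc0 a b ha1 ha2 hb1 hb2
  have hAne : A.Nonempty := ⟨_, hs0⟩
  have hAbdd : BddAbove A := ⟨t, fun s hs => hs.2.1⟩
  set s' : ℝ := sSup A with hs'
  have hs'pos : 0 < s' := lt_of_lt_of_le (lt_min hδ' ht) (le_csSup hAbdd hs0)
  have hs'le : s' ≤ t := csSup_le hAne fun s hs => hs.2.1
  -- s' ∈ A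
  obtain ⟨Lx, hLx⟩ := hx.2 s' hs'pos
  rw [Metric.tendsto_nhdsWithin_nhds] at hLx
  obtain ⟨δ2, hδ2, hL⟩ := hLx (ε/2) (by linarith)
  have hs'A : OscPart x ε s' := by
    obtain ⟨s, hsA, hslt⟩ := exists_lt_of_lt_csSup hAne (show s' - min δ2 s' < s' by
      have := lt_min hδ2 hs'pos; linarith)
    have hsle : s ≤ s' := le_csSup hAbdd hsA
    rcases eq_or_lt_of_le hsle with rfl | hslt'
    · exact hsA.2.2
    · refine oscPart_append x ε s s' hsA.2.2 hslt' ?_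
      intro a b ha1 ha2 hb1 hb2
      have hmin := lt_min hδ2 hs'pos
      have hda : dist (x a) Lx < ε/2 := hL (Set.mem_Iio.mpr ha2)
        (by rw [Real.dist_eq, abs_of_neg (by linarith : a - s' < 0)]
            have : s' - min δ2 s' < a := lt_trans hslt ha1
            have h2 : min δ2 s' ≤ δ2 := min_le_left _ _
            linarith)
      have hdb : dist (x b) Lx < ε/2 := hL (Set.mem_Iio.mpr hb2)
        (by rw [Real.dist_eq, abs_of_neg (by linarith : b - s' < 0)]
            have : s' - min δ2 s' < b := lt_trans hslt hb1
            have h2 : min δ2 s' ≤ δ2 := min_le_left _ _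
            linarith)
      calc ‖x a - x b‖ = dist (x a) (x b) := (dist_eq_norm _ _).symm
        _ ≤ dist (x a) Lx + dist (x b) Lx := dist_triangle_right _ _ _
        _ ≤ ε := by linarith
  -- s' = t
  rcases eq_or_lt_of_le hs'le with heq | hlt
  · exact heq ▸ hs'A
  · exfalso
    have hrc := hx.1 s' (le_of_lt hs'pos)
    rw [ContinuousWithinAt, Metric.tendsto_nhdsWithin_nhds] at hrc
    obtain ⟨δ3, hδ3, h3⟩ := hrc (ε/2) (by linarith)
    set s'' : ℝ := min (s' + δ3/2) t with hs''
    have hs''gt : s' < s'' := lt_min (by linarith) hlt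
    have hmem : s'' ∈ A := by
      refine ⟨lt_trans hs'pos hs''gt, min_le_right _ _, ?_⟩
      refine oscPart_append x ε s' s'' hs'A hs''gt ?_
      intro a b ha1 ha2 hb1 hb2
      have hda : dist (x a) (x s') < ε/2 := h3 (Set.mem_Ici.mpr (le_of_lt ha1))
        (by rw [Real.dist_eq, abs_of_pos (by linarith : (0:ℝ) < a - s')]
            have : a < s' + δ3/2 := lt_of_lt_of_le ha2 (min_le_left _ _)
            linarith)
      have hdb : dist (x b) (x s') < ε/2 := h3 (Set.mem_Ici.mpr (le_of_lt hb1))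
        (by rw [Real.dist_eq, abs_of_pos (by linarith : (0:ℝ) < b - s')]
            have : b < s' + δ3/2 := lt_of_lt_of_le hb2 (min_le_left _ _)
            linarith)
      calc ‖x a - x b‖ = dist (x a) (x b) := (dist_eq_norm _ _).symm
        _ ≤ dist (x a) (x s') + dist (x b) (x s') := dist_triangle_right _ _ _
        _ ≤ ε := by linarith
    have := le_csSup hAbdd hmem
    linarith
end FactC

section Bounded
variable {F : Type*} [NormedAddCommGroup F]

lemma bounded_of_cadlag (t : ℝ) (ht : 0 < t) (x : ℝ → F) (hx : IsCadlag x) :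
    ∃ M : ℝ, 0 ≤ M ∧ ∀ s : ℝ, 0 ≤ s → s ≤ t → ‖x s‖ ≤ M := by
  obtain ⟨k, u, hk, h0, hkt, hinc, hos⟩ := osc_exists t ht x hx 1 one_pos
  have hne : (Finset.range (k+1)).Nonempty := ⟨0, by simp⟩
  set G : ℕ → ℝ := fun j =>
    max ‖x (u j)‖ ‖x ((u (min j (k-1)) + u (min j (k-1) + 1))/2)‖ with hG
  set M : ℝ := 1 + (Finset.range (k+1)).sup' hne G with hM
  have hsup : ∀ j ≤ k, G j ≤ (Finset.range (k+1)).sup' hne G := by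
    intro j hj
    exact Finset.le_sup' G (Finset.mem_range.mpr (by omega))
  have hsup0 : (0:ℝ) ≤ (Finset.range (k+1)).sup' hne G :=
    le_trans (le_trans (norm_nonneg (x (u 0))) (le_max_left _ _)) (hsup 0 (by omega))
  refine ⟨M, by rw [hM]; linarith, ?_⟩
  intro s hs0 hst
  rcases eq_or_lt_of_le hst with heq | hlt
  · have : ‖x (u k)‖ ≤ G k := by rw [hG]; exact le_max_left _ _
    rw [heq, ← hkt]
    have := le_trans this (hsup k le_rfl)
    rw [hM]; linarith
  · obtain ⟨j, hj, hj1, hj2⟩ := locate u k s (h0 ▸ hs0) (hkt ▸ hlt)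
    rcases eq_or_lt_of_le hj1 with heq | hlt'
    · have : ‖x (u j)‖ ≤ G j := le_max_left _ _
      have h2 := le_trans this (hsup j (by omega))
      rw [← heq]
      rw [hM]; linarith
    · set μ : ℝ := (u j + u (j+1))/2 with hμ
      have hμ1 : u j < μ := by
        have := hinc j hj
        rw [hμ]; linarith
      have hμ2 : μ < u (j+1) := by
        have := hinc j hj
        rw [hμ]; linarith
      have hosc := hos j hj s μ hlt' hj2 hμ1 hμ2
      have hmin : min j (k-1) = j := by omega
      have hGj : ‖x μ‖ ≤ G j := by
        rw [hG]
        simp only [hmin]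
        exact le_max_right _ _
      have h3 := le_trans hGj (hsup j (by omega))
      calc ‖x s‖ ≤ ‖x s - x μ‖ + ‖x μ‖ := by have := norm_sub_norm_le (x s) (x μ); linarith [norm_nonneg (x s - x μ)]
        _ ≤ 1 + (Finset.range (k+1)).sup' hne G := by linarith
        _ = M := hM.symm
end Bounded

section Refine

lemma part_strict {t : ℝ} (σ : IntervalPartition t) {i j : ℕ} (hij : i < j) (hj : j ≤ σ.m) :
    σ.τ i < σ.τ j := seq_strict σ.τ σ.m σ.increasing i j hij hj

lemma refine_exists (t : ℝ) (ht : 0 < t) (σ σ' : IntervalPartition t) :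
    ∃ ρ : IntervalPartition t,
      (∀ j ≤ σ.m, ∃ i ≤ ρ.m, ρ.τ i = σ.τ j) ∧
      (∀ j ≤ σ'.m, ∃ i ≤ ρ.m, ρ.τ i = σ'.τ j) := by
  classical
  set s : Finset ℝ := ((Finset.range (σ.m+1)).image σ.τ) ∪
    ((Finset.range (σ'.m+1)).image σ'.τ) with hs
  have h0s : (0:ℝ) ∈ s := by
    apply Finset.mem_union_left
    exact Finset.mem_image.mpr ⟨0, Finset.mem_range.mpr (by omega), σ.first⟩
  have hts : t ∈ s := by
    apply Finset.mem_union_left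
    exact Finset.mem_image.mpr ⟨σ.m, Finset.mem_range.mpr (by omega), σ.last⟩
  have hmem_bounds : ∀ a ∈ s, 0 ≤ a ∧ a ≤ t := by
    intro a ha
    rw [hs, Finset.mem_union] at ha
    rcases ha with ha | ha <;> obtain ⟨j, hj, rfl⟩ := Finset.mem_image.mp ha
    · exact ⟨part_nonneg σ (by have := Finset.mem_range.mp hj; omega),
        part_le_t σ (by have := Finset.mem_range.mp hj; omega)⟩
    · exact ⟨part_nonneg σ' (by have := Finset.mem_range.mp hj; omega),
        part_le_t σ' (by have := Finset.mem_range.mp hj; omega)⟩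
  have hcard : 2 ≤ s.card := by
    have : (1:ℕ) < s.card := Finset.one_lt_card.mpr ⟨0, h0s, t, hts, by linarith⟩
    omega
  set N : ℕ := s.card with hN
  have hNpos : 0 < N := by omega
  set e := s.orderEmbOfFin (rfl : s.card = N) with he
  have hmemN : ∀ i : ℕ, i < N → min i (N-1) < N := by omega
  set τ : ℕ → ℝ := fun i => e ⟨min i (N-1), by omega⟩ with hτ
  have hτmono : ∀ i j : ℕ, i ≤ j → τ i ≤ τ j := by
    intro i j hij
    apply e.monotone
    simp only [Fin.mk_le_mk]
    omega
  have hτstrict : ∀ i j : ℕ, i < j → j ≤ N - 1 → τ i < τ j := by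
    intro i j hij hj
    apply e.strictMono
    simp only [Fin.mk_lt_mk]
    omega
  -- e hits everything in s
  have hsurj : ∀ a ∈ s, ∃ i : ℕ, i ≤ N - 1 ∧ τ i = a := by
    intro a ha
    have : a ∈ Set.range e := by rw [Finset.range_orderEmbOfFin]; exact ha
    obtain ⟨⟨i, hi⟩, hia⟩ := this
    refine ⟨i, by omega, ?_⟩
    have hfin : (⟨min i (N-1), by omega⟩ : Fin N) = ⟨i, hi⟩ := by
      apply Fin.ext
      simp only
      omega
    calc τ i = e ⟨min i (N-1), by omega⟩ := rfl
      _ = e ⟨i, hi⟩ := by rw [hfin]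
      _ = a := hia
  have hτ0 : τ 0 = 0 := by
    obtain ⟨i0, hi0, hi0e⟩ := hsurj 0 h0s
    have h1 : τ 0 ≤ τ i0 := hτmono 0 i0 (by omega)
    rw [hi0e] at h1
    have h2 : 0 ≤ τ 0 := (hmem_bounds _ (by
      rw [hτ]; exact Finset.orderEmbOfFin_mem s rfl _)).1
    linarith
  have hτlast : τ (N-1) = t := by
    obtain ⟨i0, hi0, hi0e⟩ := hsurj t hts
    have h1 : τ i0 ≤ τ (N-1) := hτmono i0 (N-1) hi0
    rw [hi0e] at h1
    have h2 : τ (N-1) ≤ t := (hmem_bounds _ (by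
      rw [hτ]; exact Finset.orderEmbOfFin_mem s rfl _)).2
    linarith
  refine ⟨⟨N - 1, τ, by omega, hτ0, hτlast, ?_⟩, ?_, ?_⟩
  · intro i hi
    exact hτstrict i (i+1) (by omega) (by omega)
  · intro j hj
    exact hsurj (σ.τ j) (Finset.mem_union_left _
      (Finset.mem_image.mpr ⟨j, Finset.mem_range.mpr (by omega), rfl⟩))
  · intro j hj
    exact hsurj (σ'.τ j) (Finset.mem_union_right _
      (Finset.mem_image.mpr ⟨j, Finset.mem_range.mpr (by omega), rfl⟩))
end Refine

section Regroup
lemma seq_mono_le (u : ℕ → ℕ) (k : ℕ)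
    (h : ∀ i < k, u i ≤ u (i+1)) : ∀ i j, i ≤ j → j ≤ k → u i ≤ u j := by
  intro i j hij hjk
  induction j with
  | zero => simp_all
  | succ j ih =>
    rcases Nat.lt_or_ge i (j+1) with hl | hg
    · exact le_trans (ih (by omega) (by omega)) (h j (by omega))
    · have : i = j + 1 := by omega
      subst this; rfl

lemma sum_blocks {M : Type*} [AddCommMonoid M] (n : ℕ → ℕ) (k : ℕ)
    (hmono : ∀ j < k, n j ≤ n (j+1)) (g : ℕ → M) :
    ∑ j ∈ Finset.range k, ∑ i ∈ Finset.Ico (n j) (n (j+1)), g i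
      = ∑ i ∈ Finset.Ico (n 0) (n k), g i := by
  induction k with
  | zero => simp
  | succ k ih =>
    rw [Finset.sum_range_succ, ih (fun j hj => hmono j (by omega))]
    have h0k : n 0 ≤ n k := seq_mono_le n (k+1) hmono 0 k (by omega) (by omega)
    exact Finset.sum_Ico_consecutive g h0k (hmono k (by omega))
end Regroup

section SumRefine
variable {E Z : Type*} [NormedAddCommGroup E] [NormedSpace ℝ E]
  [NormedAddCommGroup Z] [NormedSpace ℝ Z]

lemma sum_over_refinement (t : ℝ) (x : ℝ → (E →L[ℝ] Z)) (y : ℝ → E)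
    (σ ρ : IntervalPartition t) (δ : ℝ)
    (hmesh : ∀ j < σ.m, σ.τ (j+1) - σ.τ j < δ)
    (hsub : ∀ j ≤ σ.m, ∃ i ≤ ρ.m, ρ.τ i = σ.τ j) :
    ∃ A : ℕ → ℝ,
      (∀ i < ρ.m, ρ.τ i - δ < A i ∧ A i ≤ ρ.τ i ∧ ρ.τ (i+1) ≤ A i + δ ∧
        0 ≤ A i ∧ A i ≤ t) ∧
      (∑ j ∈ Finset.range σ.m, x (σ.τ j) (y (σ.τ (j+1)) - y (σ.τ j)))
        = ∑ i ∈ Finset.range ρ.m, x (A i) (y (ρ.τ (i+1)) - y (ρ.τ i)) := by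
  classical
  set n : ℕ → ℕ := fun j => if h : j ≤ σ.m then (hsub j h).choose else 0 with hn
  have hn1 : ∀ j, (hj : j ≤ σ.m) → n j ≤ ρ.m ∧ ρ.τ (n j) = σ.τ j := by
    intro j hj
    have hspec := (hsub j hj).choose_spec
    rw [hn]
    simp only [dif_pos hj]
    exact hspec
  have hnstrict : ∀ j < σ.m, n j < n (j+1) := by
    intro j hj
    by_contra hcon
    push_neg at hcon
    have h1 := hn1 j (by omega)
    have h2 := hn1 (j+1) (by omega)
    have : ρ.τ (n (j+1)) ≤ ρ.τ (n j) :=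
      seq_mono ρ.τ ρ.m ρ.increasing (n (j+1)) (n j) hcon h1.1
    rw [h1.2, h2.2] at this
    exact absurd this (not_le.mpr (σ.increasing j hj))
  have hnmono : ∀ i j, i ≤ j → j ≤ σ.m → n i ≤ n j := seq_mono n σ.m hnstrict
  have hn0 : n 0 = 0 := by
    by_contra hcon
    have h1 := hn1 0 (by omega)
    have : ρ.τ 0 < ρ.τ (n 0) := part_strict ρ (by omega) h1.1
    rw [h1.2, ρ.first, σ.first] at this
    exact absurd this (lt_irrefl 0)
  have hnm : n σ.m = ρ.m := by
    have h1 := hn1 σ.m le_rfl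
    rcases eq_or_lt_of_le h1.1 with heq | hlt
    · exact heq
    · exfalso
      have : ρ.τ (n σ.m) < ρ.τ ρ.m := part_strict ρ hlt le_rfl
      rw [h1.2, ρ.last, σ.last] at this
      exact absurd this (lt_irrefl t)
  set J : ℕ → ℕ := fun i => if h : i < ρ.m then
    (locate n σ.m i (by rw [hn0]; omega) (by rw [hnm]; omega)).choose else 0 with hJdef
  have hJ : ∀ i, (hi : i < ρ.m) → J i < σ.m ∧ n (J i) ≤ i ∧ i < n (J i + 1) := by
    intro i hi
    have hspec := (locate n σ.m i (by rw [hn0]; omega) (by rw [hnm]; omega)).choose_spec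
    rw [hJdef]
    simp only [dif_pos hi]
    exact ⟨hspec.1, hspec.2.1, hspec.2.2⟩
  have hJuniq : ∀ j < σ.m, ∀ i, n j ≤ i → i < n (j+1) → J i = j := by
    intro j hj i hni hni'
    have hiρ : i < ρ.m := by
      have := (hn1 (j+1) (by omega)).1
      omega
    obtain ⟨hJ1, hJ2, hJ3⟩ := hJ i hiρ
    by_contra hne
    rcases Nat.lt_or_ge (J i) j with hlt | hge
    · have : n (J i + 1) ≤ n j := hnmono (J i + 1) j (by omega) (by omega)
      omega
    · have hgt : j < J i := by omega
      have : n (j + 1) ≤ n (J i) := hnmono (j+1) (J i) (by omega) (by omega)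
      omega
  set A : ℕ → ℝ := fun i => σ.τ (J i) with hA
  refine ⟨A, ?_, ?_⟩
  · intro i hi
    obtain ⟨hJ1, hJ2, hJ3⟩ := hJ i hi
    have hnJ := hn1 (J i) (by omega)
    have hnJ1 := hn1 (J i + 1) (by omega)
    have hle : A i ≤ ρ.τ i := by
      rw [hA]
      simp only
      rw [← hnJ.2]
      exact seq_mono ρ.τ ρ.m ρ.increasing (n (J i)) i hJ2 (by omega)
    have hlt : ρ.τ i < σ.τ (J i + 1) := by
      rw [← hnJ1.2]
      exact part_strict ρ hJ3 hnJ1.1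
    have hmeshJ := hmesh (J i) hJ1
    have hnext : ρ.τ (i+1) ≤ σ.τ (J i + 1) := by
      rw [← hnJ1.2]
      exact seq_mono ρ.τ ρ.m ρ.increasing (i+1) (n (J i + 1)) hJ3 hnJ1.1
    refine ⟨by simp only [hA]; linarith, hle, by linarith, part_nonneg σ (by omega),
      part_le_t σ (by omega)⟩
  · have step1 : ∀ j ∈ Finset.range σ.m,
        x (σ.τ j) (y (σ.τ (j+1)) - y (σ.τ j))
          = ∑ i ∈ Finset.Ico (n j) (n (j+1)), x (A i) (y (ρ.τ (i+1)) - y (ρ.τ i)) := by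
      intro j hj
      rw [Finset.mem_range] at hj
      have htel : ∑ i ∈ Finset.Ico (n j) (n (j+1)), (y (ρ.τ (i+1)) - y (ρ.τ i))
          = y (σ.τ (j+1)) - y (σ.τ j) := by
        rw [Finset.sum_Ico_eq_sum_range]
        have hrw : ∀ i ∈ Finset.range (n (j+1) - n j),
            y (ρ.τ (n j + i + 1)) - y (ρ.τ (n j + i)) =
            (fun p => y (ρ.τ (n j + p))) (i+1) - (fun p => y (ρ.τ (n j + p))) i := by
          intro i _
          rfl
        rw [Finset.sum_congr rfl hrw, Finset.sum_range_sub (fun p => y (ρ.τ (n j + p)))]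
        have e1 : n j + (n (j+1) - n j) = n (j+1) := by
          have := hnmono j (j+1) (by omega) (by omega)
          omega
        rw [e1]
        simp only [Nat.add_zero]
        rw [(hn1 (j+1) (by omega)).2, (hn1 j (by omega)).2]
      have hAi : ∀ i ∈ Finset.Ico (n j) (n (j+1)), A i = σ.τ j := by
        intro i hi
        rw [Finset.mem_Ico] at hi
        rw [hA]
        simp only
        rw [hJuniq j hj i hi.1 hi.2]
      calc x (σ.τ j) (y (σ.τ (j+1)) - y (σ.τ j))
          = x (σ.τ j) (∑ i ∈ Finset.Ico (n j) (n (j+1)), (y (ρ.τ (i+1)) - y (ρ.τ i))) := by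
            rw [htel]
        _ = ∑ i ∈ Finset.Ico (n j) (n (j+1)), x (σ.τ j) (y (ρ.τ (i+1)) - y (ρ.τ i)) :=
            map_sum (x (σ.τ j)) _ _
        _ = ∑ i ∈ Finset.Ico (n j) (n (j+1)), x (A i) (y (ρ.τ (i+1)) - y (ρ.τ i)) :=
            Finset.sum_congr rfl fun i hi => by rw [hAi i hi]
    rw [Finset.sum_congr rfl step1,
      sum_blocks n σ.m (fun j hj => (hnstrict j hj).le) _, hn0, hnm,
      ← Finset.range_eq_Ico]
end SumRefine

section Cauchy
variable {E Z : Type*} [NormedAddCommGroup E] [NormedSpace ℝ E]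
  [NormedAddCommGroup Z] [NormedSpace ℝ Z]

lemma cauchy_est (t : ℝ) (ht : 0 < t) (x : ℝ → (E →L[ℝ] Z)) (hx : IsCadlag x)
    (y : ℝ → E) (hy : IsCadlag y) (V : ℝ)
    (hV : ∀ σ : IntervalPartition t,
      ∑ i ∈ Finset.range σ.m, ‖y (σ.τ (i + 1)) - y (σ.τ i)‖ ≤ V)
    (ε : ℝ) (hε : 0 < ε) :
    ∃ δ : ℝ, 0 < δ ∧ ∀ σ σ' : IntervalPartition t,
      (∀ i < σ.m, σ.τ (i+1) - σ.τ i < δ) → (∀ i < σ'.m, σ'.τ (i+1) - σ'.τ i < δ) →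
      ‖(∑ j ∈ Finset.range σ.m, x (σ.τ j) (y (σ.τ (j+1)) - y (σ.τ j)))
        - ∑ j ∈ Finset.range σ'.m, x (σ'.τ j) (y (σ'.τ (j+1)) - y (σ'.τ j))‖ ≤ ε := by
  classical
  have hV0 : 0 ≤ V := by
    have := hV ⟨1, fun i => if i = 0 then 0 else t, one_pos, by simp, by simp,
      by intro i hi; simp only [show i = 0 from by omega]; norm_num [ht]⟩
    simp only [Finset.range_one, Finset.sum_singleton] at this
    exact le_trans (norm_nonneg _) this
  obtain ⟨M, hM0, hM⟩ := bounded_of_cadlag t ht x hx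
  set ε₁ : ℝ := ε / (2*(V+1)) with hε₁def
  have hε₁ : 0 < ε₁ := by positivity
  obtain ⟨k, u, hk, hu0, hut, huinc, huos⟩ := osc_exists t ht x hx ε₁ hε₁
  set ε₂ : ℝ := ε / (2*(k+1)*(2*M+1)) with hε₂def
  have hε₂ : 0 < ε₂ := by positivity
  have hubounds : ∀ l ≤ k, 0 ≤ u l ∧ u l ≤ t := by
    intro l hl
    constructor
    · have := seq_mono u k huinc 0 l (by omega) hl
      rwa [hu0] at this
    · have := seq_mono u k huinc l k hl le_rfl
      rwa [hut] at this
  set D : ℕ → ℝ := fun l => if h : l ≤ k then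
    (small_var_right t ht y hy.1 V hV (u l) (hubounds l h).1 (hubounds l h).2 ε₂ hε₂).choose
    else 1 with hD
  have hDspec : ∀ l, (hl : l ≤ k) → 0 < D l ∧
      ∀ (r : ℕ) (v : ℕ → ℝ), (∀ i < r, v i < v (i+1)) → u l ≤ v 0 → v r ≤ u l + D l →
        v r ≤ t → ∑ i ∈ Finset.range r, ‖y (v (i+1)) - y (v i)‖ ≤ ε₂ := by
    intro l hl
    have hspec := (small_var_right t ht y hy.1 V hV (u l) (hubounds l hl).1
      (hubounds l hl).2 ε₂ hε₂).choose_spec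
    rw [hD]
    simp only [dif_pos hl]
    exact hspec
  have hne : (Finset.range (k+1)).Nonempty := ⟨0, by simp⟩
  set δ : ℝ := (Finset.range (k+1)).inf' hne (fun l => D l / 2) with hδdef
  have hδpos : 0 < δ := by
    rw [hδdef, Finset.lt_inf'_iff]
    intro l hl
    have := (hDspec l (by simpa [Nat.lt_succ_iff] using hl)).1
    linarith
  have hδD : ∀ l ≤ k, 2 * δ ≤ D l := by
    intro l hl
    have : δ ≤ D l / 2 := Finset.inf'_le _ (Finset.mem_range.mpr (by omega))
    linarith
  refine ⟨δ, hδpos, ?_⟩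
  intro σ σ' hm1 hm2
  obtain ⟨ρ, hsub1, hsub2⟩ := refine_exists t ht σ σ'
  obtain ⟨A, hApos, hAsum⟩ := sum_over_refinement t x y σ ρ δ hm1 hsub1
  obtain ⟨B, hBpos, hBsum⟩ := sum_over_refinement t x y σ' ρ δ hm2 hsub2
  rw [hAsum, hBsum, ← Finset.sum_sub_distrib]
  set Δn : ℕ → ℝ := fun i => ‖y (ρ.τ (i+1)) - y (ρ.τ i)‖ with hΔn
  have hVρ : ∑ i ∈ Finset.range ρ.m, Δn i ≤ V := hV ρ
  set Bad : ℕ → Prop := fun i => ∃ l ≤ k, ρ.τ i - δ < u l ∧ u l ≤ ρ.τ i with hBad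
  -- termwise bound
  have hterm : ∀ i ∈ Finset.range ρ.m,
      ‖x (A i) (y (ρ.τ (i+1)) - y (ρ.τ i)) - x (B i) (y (ρ.τ (i+1)) - y (ρ.τ i))‖ ≤
      (if Bad i then 2*M+1 else ε₁) * Δn i := by
    intro i hi
    rw [Finset.mem_range] at hi
    obtain ⟨hA1, hA2, hA3, hA4, hA5⟩ := hApos i hi
    obtain ⟨hB1, hB2, hB3, hB4, hB5⟩ := hBpos i hi
    have hop : ‖x (A i) (y (ρ.τ (i+1)) - y (ρ.τ i)) - x (B i) (y (ρ.τ (i+1)) - y (ρ.τ i))‖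
        ≤ ‖x (A i) - x (B i)‖ * Δn i := by
      rw [← ContinuousLinearMap.sub_apply]
      exact ContinuousLinearMap.le_opNorm _ _
    refine le_trans hop (mul_le_mul_of_nonneg_right ?_ (norm_nonneg _))
    by_cases hb : Bad i
    · rw [if_pos hb]
      calc ‖x (A i) - x (B i)‖ ≤ ‖x (A i)‖ + ‖x (B i)‖ := norm_sub_le _ _
        _ ≤ 2*M+1 := by
          have := hM (A i) hA4 hA5
          have := hM (B i) hB4 hB5
          linarith
    · rw [if_neg hb]
      have hρ0 : 0 ≤ ρ.τ i := part_nonneg ρ (by omega)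
      have hρt : ρ.τ i ≤ t := part_le_t ρ (by omega)
      have hδle : δ ≤ ρ.τ i := by
        by_contra hcon
        push_neg at hcon
        exact hb ⟨0, by omega, by rw [hu0]; linarith, by rw [hu0]; linarith⟩
      obtain ⟨j, hj, hj1, hj2⟩ := locate u k (ρ.τ i - δ)
        (by rw [hu0]; linarith) (by rw [hut]; linarith)
      have hj3 : ρ.τ i < u (j+1) := by
        by_contra hcon
        push_neg at hcon
        exact hb ⟨j+1, by omega, by linarith, hcon⟩
      exact huos j hj (A i) (B i) (by linarith) (by linarith) (by linarith) (by linarith)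
  have h1 : ‖∑ i ∈ Finset.range ρ.m,
      (x (A i) (y (ρ.τ (i+1)) - y (ρ.τ i)) - x (B i) (y (ρ.τ (i+1)) - y (ρ.τ i)))‖ ≤
      ∑ i ∈ Finset.range ρ.m, (if Bad i then 2*M+1 else ε₁) * Δn i :=
    le_trans (norm_sum_le _ _) (Finset.sum_le_sum hterm)
  refine le_trans h1 ?_
  -- split into good and bad
  rw [← Finset.sum_filter_add_sum_filter_not (Finset.range ρ.m) Bad]
  have hgood : ∑ i ∈ (Finset.range ρ.m).filter (fun i => ¬ Bad i),
      (if Bad i then 2*M+1 else ε₁) * Δn i ≤ ε₁ * V := by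
    have : ∀ i ∈ (Finset.range ρ.m).filter (fun i => ¬ Bad i),
        (if Bad i then 2*M+1 else ε₁) * Δn i = ε₁ * Δn i := by
      intro i hi
      rw [Finset.mem_filter] at hi
      rw [if_neg hi.2]
    rw [Finset.sum_congr rfl this, ← Finset.mul_sum]
    refine mul_le_mul_of_nonneg_left ?_ hε₁.le
    refine le_trans (Finset.sum_le_sum_of_subset_of_nonneg (Finset.filter_subset _ _)
      (fun i _ _ => norm_nonneg _)) hVρ
  have hbadsum : ∑ i ∈ (Finset.range ρ.m).filter Bad, Δn i ≤ (k+1) * ε₂ := by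
    set C : ℕ → Finset ℕ := fun l =>
      (Finset.range ρ.m).filter (fun i => u l ≤ ρ.τ i ∧ ρ.τ i < u l + δ) with hC
    have hsubset : (Finset.range ρ.m).filter Bad ⊆ (Finset.range (k+1)).biUnion C := by
      intro i hi
      rw [Finset.mem_filter] at hi
      obtain ⟨l, hl, hl1, hl2⟩ := hi.2
      rw [Finset.mem_biUnion]
      exact ⟨l, Finset.mem_range.mpr (by omega),
        Finset.mem_filter.mpr ⟨hi.1, hl2, by linarith⟩⟩
    refine le_trans (Finset.sum_le_sum_of_subset_of_nonneg hsubset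
      (fun i _ _ => norm_nonneg _)) ?_
    refine le_trans (sum_biUnion_le_real _ _ _ (fun i => norm_nonneg _)) ?_
    have hCl : ∀ l ∈ Finset.range (k+1), ∑ i ∈ C l, Δn i ≤ ε₂ := by
      intro l hl
      rw [Finset.mem_range] at hl
      have hlk : l ≤ k := by omega
      rcases Finset.eq_empty_or_nonempty (C l) with hemp | hCne
      · rw [hemp]; simp [hε₂.le]
      · set p : ℕ := (C l).min' hCne with hp
        set q : ℕ := (C l).max' hCne with hq
        have hpC : p ∈ Finset.range ρ.m ∧ (u l ≤ ρ.τ p ∧ ρ.τ p < u l + δ) :=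
          Finset.mem_filter.mp ((C l).min'_mem hCne)
        have hqC : q ∈ Finset.range ρ.m ∧ (u l ≤ ρ.τ q ∧ ρ.τ q < u l + δ) :=
          Finset.mem_filter.mp ((C l).max'_mem hCne)
        rw [Finset.mem_range] at hpC hqC
        have hIcc : ∑ i ∈ C l, Δn i ≤ ∑ i ∈ Finset.Icc p q, Δn i := by
          refine Finset.sum_le_sum_of_subset_of_nonneg ?_ (fun i _ _ => norm_nonneg _)
          intro i hi
          rw [Finset.mem_Icc]
          exact ⟨(C l).min'_le i hi, (C l).le_max' i hi⟩
        refine le_trans hIcc ?_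
        have hIco : ∑ i ∈ Finset.Icc p q, Δn i = ∑ jj ∈ Finset.range (q+1-p), Δn (p + jj) := by
          rw [← Finset.Ico_add_one_right_eq_Icc, Finset.sum_Ico_eq_sum_range]
        rw [hIco]
        have hchain := (hDspec l hlk).2 (q+1-p) (fun jj => ρ.τ (p + jj))
        have hpq : p ≤ q := (C l).min'_le q ((C l).max'_mem hCne)
        refine le_of_le_of_eq (hchain ?_ ?_ ?_ ?_) rfl |>.trans le_rfl
        · intro jj hjj
          exact ρ.increasing (p + jj) (by omega)
        · exact hpC.2.1
        · have e1 : p + (q+1-p) = q + 1 := by omega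
          rw [e1]
          obtain ⟨_, _, hq3, _, _⟩ := hApos q hqC.1
          have := hApos q hqC.1
          have h2δ := hδD l hlk
          -- ρ.τ (q+1) ≤ A q + δ ≤ ρ.τ q + δ < u l + 2δ ≤ u l + D l
          have hAq2 : A q ≤ ρ.τ q := this.2.1
          linarith [hqC.2.2]
        · have e1 : p + (q+1-p) = q + 1 := by omega
          rw [e1]
          exact part_le_t ρ (by omega)
    calc ∑ l ∈ Finset.range (k+1), ∑ i ∈ C l, Δn i ≤
        ∑ l ∈ Finset.range (k+1), ε₂ := Finset.sum_le_sum hCl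
      _ = (k+1) * ε₂ := by
        rw [Finset.sum_const, Finset.card_range]
        push_cast
        ring
  have hbad : ∑ i ∈ (Finset.range ρ.m).filter Bad,
      (if Bad i then 2*M+1 else ε₁) * Δn i ≤ (2*M+1) * ((k+1) * ε₂) := by
    have : ∀ i ∈ (Finset.range ρ.m).filter Bad,
        (if Bad i then 2*M+1 else ε₁) * Δn i = (2*M+1) * Δn i := by
      intro i hi
      rw [Finset.mem_filter] at hi
      rw [if_pos hi.2]
    rw [Finset.sum_congr rfl this, ← Finset.mul_sum]
    exact mul_le_mul_of_nonneg_left hbadsum (by linarith)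
  have harith1 : ε₁ * V ≤ ε / 2 := by
    have h2 : ε₁ * (V + 1) = ε / 2 := by
      rw [hε₁def]
      field_simp
    nlinarith [hε₁.le]
  have harith2 : (2*M+1) * ((k+1) * ε₂) = ε / 2 := by
    rw [hε₂def]
    have hk1 : ((k:ℝ)+1) ≠ 0 := by positivity
    have hM1 : (2*M+1) ≠ 0 := by positivity
    field_simp
  linarith
end Cauchy

noncomputable def unifPart (t : ℝ) (ht : 0 < t) (n : ℕ) : IntervalPartition t where
  m := n + 1
  τ := fun i => ((min i (n+1) : ℕ) : ℝ) * (t / (n+1))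
  m_pos := by omega
  first := by simp
  last := by
    simp only [min_self]
    field_simp
    push_cast; ring
  increasing := by
    intro i hi
    have h1 : min i (n+1) = i := by omega
    have h2 : min (i+1) (n+1) = i + 1 := by omega
    show ((min i (n+1) : ℕ):ℝ) * (t/(n+1)) < ((min (i+1) (n+1) : ℕ):ℝ) * (t/(n+1))
    rw [h1, h2]
    have hc : 0 < t / (n+1) := by positivity
    have : (i:ℝ) < (i:ℝ) + 1 := by linarith
    push_cast
    nlinarith

lemma unifPart_mesh (t : ℝ) (ht : 0 < t) (n : ℕ) :
    ∀ i < (unifPart t ht n).m, (unifPart t ht n).τ (i+1) - (unifPart t ht n).τ i = t / (n+1) := by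
  intro i hi
  simp only [unifPart] at hi ⊢
  have h1 : min i (n+1) = i := by omega
  have h2 : min (i+1) (n+1) = i + 1 := by omega
  rw [h1, h2]
  push_cast
  ring


/-- Convergence of operator-valued left-endpoint Riemann–Stieltjes sums: if
`x : [0,∞) → L(X*,Y)` is cadlag and `y* : [0,∞) → X*` is cadlag with finite total
variation on `[0,t]`, then the `Y`-valued sums `∑ x(t_i)(y*(t_{i+1}) − y*(t_i))`
converge as the mesh goes to `0`. -/
theorem riemann_stieltjes_sums_converge_operator_valued
    {X Y : Type*} [NormedAddCommGroup X] [NormedSpace ℝ X] [CompleteSpace X]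
    [NormedAddCommGroup Y] [NormedSpace ℝ Y] [CompleteSpace Y]
    (t : ℝ) (ht : 0 < t)
    (x : ℝ → ((X →L[ℝ] ℝ) →L[ℝ] Y)) (hx : IsCadlag x)
    (ystar : ℝ → (X →L[ℝ] ℝ)) (hy : IsCadlag ystar)
    (V : ℝ)
    (hV : ∀ σ : IntervalPartition t,
      ∑ i ∈ Finset.range σ.m, ‖ystar (σ.τ (i + 1)) - ystar (σ.τ i)‖ ≤ V) :
    ∃ L : Y, ∀ ε : ℝ, 0 < ε → ∃ δ : ℝ, 0 < δ ∧
      ∀ σ : IntervalPartition t, (∀ i < σ.m, σ.τ (i + 1) - σ.τ i < δ) →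
        ‖(∑ i ∈ Finset.range σ.m,
            x (σ.τ i) (ystar (σ.τ (i + 1)) - ystar (σ.τ i))) - L‖ < ε := by
  set S : IntervalPartition t → Y := fun σ =>
    ∑ i ∈ Finset.range σ.m, x (σ.τ i) (ystar (σ.τ (i + 1)) - ystar (σ.τ i)) with hS
  set seq : ℕ → Y := fun n => S (unifPart t ht n) with hseq
  have hmesh_small : ∀ δ : ℝ, 0 < δ → ∃ N : ℕ, ∀ n ≥ N,
      ∀ i < (unifPart t ht n).m, (unifPart t ht n).τ (i+1) - (unifPart t ht n).τ i < δ := by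
    intro δ hδ
    obtain ⟨N, hN⟩ := exists_nat_gt (t / δ)
    refine ⟨N, fun n hn i hi => ?_⟩
    rw [unifPart_mesh t ht n i hi]
    have hcast : ((N:ℝ)) ≤ (n:ℝ) := by exact_mod_cast hn
    have h1 : t / ((n:ℝ)+1) ≤ t / ((N:ℝ)+1) := by
      gcongr
    have h2 : t / ((N:ℝ)+1) < δ := by
      have hNd : t / δ < (N:ℝ) := hN
      rw [div_lt_iff₀ hδ] at hNd
      rw [div_lt_iff₀ (show (0:ℝ) < (N:ℝ)+1 by positivity)]
      nlinarith
    linarith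
  have hcauchy : CauchySeq seq := by
    rw [Metric.cauchySeq_iff]
    intro ε hε
    obtain ⟨δ, hδ, hest⟩ := cauchy_est t ht x hx ystar hy V hV (ε/2) (by linarith)
    obtain ⟨N, hN⟩ := hmesh_small δ hδ
    refine ⟨N, fun m hm n hn => ?_⟩
    have := hest (unifPart t ht m) (unifPart t ht n) (hN m hm) (hN n hn)
    rw [dist_eq_norm]
    calc ‖seq m - seq n‖ ≤ ε/2 := this
      _ < ε := by linarith
  obtain ⟨L, hL⟩ := cauchySeq_tendsto_of_complete hcauchy
  refine ⟨L, fun ε hε => ?_⟩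
  obtain ⟨δ, hδ, hest⟩ := cauchy_est t ht x hx ystar hy V hV (ε/4) (by linarith)
  refine ⟨δ, hδ, fun σ hσ => ?_⟩
  obtain ⟨N, hN⟩ := hmesh_small δ hδ
  obtain ⟨N2, hN2⟩ := Metric.tendsto_atTop.mp hL (ε/4) (by linarith)
  set n := max N N2 with hn
  have h1 := hN n (le_max_left _ _)
  have h2 := hN2 n (le_max_right _ _)
  have h3 : ‖S σ - seq n‖ ≤ ε/4 := hest σ (unifPart t ht n) hσ h1
  have h4 : dist (S σ) L ≤ dist (S σ) (seq n) + dist (seq n) L := dist_triangle _ _ _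
  rw [dist_eq_norm, dist_eq_norm, dist_eq_norm] at h4
  rw [dist_eq_norm] at h2
  have h5 : ‖S σ - L‖ < ε := by linarith
  exact h5
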